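/- Let k ≥ 0 and let P₁, P₂, P₃ ∈ 𝒫_{k−1} satisfy x P₁ + y P₂ + z P₃ = 0. If the row-wise divergence of M(P₁,P₂,P₃) is the gradient of some polynomial q ∈ 𝒫_k, i.e. Σ_{j=1}^{3} ∂_{x_j}(x_j P_i) = ∂_{x_i} q for i = 1, 2, 3, then P₁ = P₂ = P₃ = 0. -/

import Mathlib

open MvPolynomial

noncomputable section

/-- Real polynomials in the three variables `x, y, z` (indexed `0, 1, 2`). -/
abbrev P3 := MvPolynomial (Fin 3) ℝ

/-- Membership in `𝒫_m`, the space of polynomials of total degree at most `m`,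
with the convention `𝒫_m = {0}` for `m < 0`. -/
def memP (m : ℤ) (p : P3) : Prop := p = 0 ∨ (p.totalDegree : ℤ) ≤ m

/-- The row-wise divergence of the matrix `M(P₁,P₂,P₃)` with entries `M i j = x_j * P i`:
its `i`-th component is `Σ_j ∂_{x_j} (x_j P_i)`. -/
def rowDiv (P : Fin 3 → P3) : Fin 3 → P3 := fun i => ∑ j : Fin 3, pderiv j (X j * P i)

lemma D_monomial (s : Fin 3 →₀ ℕ) (a : ℝ) (j : Fin 3) :
    pderiv j (X j * monomial s a) = monomial s (a * (s j + 1)) := by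
  have : (X j : P3) * monomial s a = monomial (s + Finsupp.single j 1) a := by
    rw [X, monomial_mul, one_mul, add_comm]
  rw [this, pderiv_monomial]
  congr 1
  · simp [add_tsub_cancel_right]
  · simp

lemma coeff_D (p : P3) (m : Fin 3 →₀ ℕ) :
    coeff m (∑ j : Fin 3, pderiv j (X j * p)) = ((3 + ∑ j : Fin 3, m j : ℕ) : ℝ) * coeff m p := by
  induction p using MvPolynomial.induction_on' with
  | monomial s a =>
      simp only [D_monomial, coeff_monomial]
      by_cases h : s = m
      · subst h
        simp [Fin.sum_univ_three, coeff_monomial]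
        push_cast
        ring
      · simp [coeff_monomial, h, Fin.sum_univ_three]
  | add p q hp hq =>
      simp only [mul_add, map_add, Finset.sum_add_distrib, coeff_add, hp, hq]

/-- If `∑_j ∂_j (x_j p) = c • p` with `c < 3` ... in fact the case we need: `D p = 0 ⇒ p = 0`. -/
lemma D_eq_zero (p : P3) (h : ∑ j : Fin 3, pderiv j (X j * p) = 0) : p = 0 := by
  ext m
  have := coeff_D p m
  rw [h] at this
  have h3 : ((3 + ∑ j : Fin 3, m j : ℕ) : ℝ) ≠ 0 := by positivity
  have := this.symm
  simp only [coeff_zero] at this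
  rcases mul_eq_zero.mp this with h' | h'
  · exact absurd h' h3
  · simp [h']

lemma euler_step (i : Fin 3) (p : P3) :
    ∑ j : Fin 3, pderiv j (X j * (X i * p))
      = X i * (∑ j : Fin 3, pderiv j (X j * p)) + X i * p := by
  have step : ∀ j : Fin 3, pderiv j (X j * (X i * p))
      = (if j = i then X i * p else 0) + X i * pderiv j (X j * p) := by
    intro j
    rw [show (X j : P3) * (X i * p) = X i * (X j * p) by ring, pderiv_mul, pderiv_X]
    by_cases h : j = i
    · subst h; simp [Pi.single_eq_same]
    · simp [Pi.single_eq_of_ne h, h]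
  simp only [step, Finset.sum_add_distrib, Finset.sum_ite_eq' Finset.univ i,
    Finset.mem_univ, if_pos, Finset.mul_sum]
  ring

theorem trace_free_inter_gradient_trivial (k : ℕ) (P : Fin 3 → P3)
    (hdeg : ∀ i, memP ((k : ℤ) - 1) (P i))
    (htr : X 0 * P 0 + X 1 * P 1 + X 2 * P 2 = 0)
    (q : P3) (hq : memP (k : ℤ) q)
    (hdiv : ∀ i, rowDiv P i = pderiv i q) :
    ∀ i, P i = 0 := by
  -- Step 1: ∑_i x_i ∂_i q = 0 (Euler operator applied to q vanishes).
  have hE : ∑ i : Fin 3, X i * pderiv i q = 0 := by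
    have h0 : ∑ j : Fin 3, pderiv j (X j * (X 0 * P 0 + X 1 * P 1 + X 2 * P 2)) = 0 := by
      rw [htr]; simp
    have hexp : ∑ j : Fin 3, pderiv j (X j * (X 0 * P 0 + X 1 * P 1 + X 2 * P 2))
        = (∑ i : Fin 3, X i * rowDiv P i) + (X 0 * P 0 + X 1 * P 1 + X 2 * P 2) := by
      have h1 : ∑ j : Fin 3, pderiv j (X j * (X 0 * P 0 + X 1 * P 1 + X 2 * P 2))
          = (∑ j : Fin 3, pderiv j (X j * (X 0 * P 0)))
            + (∑ j : Fin 3, pderiv j (X j * (X 1 * P 1)))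
            + (∑ j : Fin 3, pderiv j (X j * (X 2 * P 2))) := by
        simp only [mul_add, map_add, Finset.sum_add_distrib]
      rw [h1, euler_step 0 (P 0), euler_step 1 (P 1), euler_step 2 (P 2)]
      simp only [rowDiv, Fin.sum_univ_three]
      ring
    rw [hexp, htr, add_zero] at h0
    calc ∑ i : Fin 3, X i * pderiv i q = ∑ i : Fin 3, X i * rowDiv P i := by
          refine Finset.sum_congr rfl fun i _ => ?_
          rw [hdiv i]
      _ = 0 := h0
  -- Step 2: D q = 3 q, hence q has only a constant term.
  have hDq : ∑ j : Fin 3, pderiv j (X j * q) = 3 * q + ∑ j : Fin 3, X j * pderiv j q := by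
    have : ∀ j : Fin 3, pderiv j (X j * q) = q + X j * pderiv j q := by
      intro j
      rw [pderiv_mul, pderiv_X_self, one_mul]
    simp only [this, Finset.sum_add_distrib, Fin.sum_univ_three]
    ring
  have hq0 : ∀ m : Fin 3 →₀ ℕ, m ≠ 0 → coeff m q = 0 := by
    intro m hm
    have := coeff_D q m
    rw [hDq, hE, add_zero] at this
    have hcm : coeff m (3 * q) = 3 * coeff m q := by
      have : (3 : P3) = C (3 : ℝ) := by simp [map_ofNat]
      rw [this, coeff_C_mul]
    rw [hcm] at this
    have hdm : (0 : ℕ) < ∑ j : Fin 3, m j := by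
      by_contra hc
      push_neg at hc
      apply hm
      ext j
      have := Nat.le_zero.mp hc
      have : m j = 0 := by
        have := Finset.sum_eq_zero_iff.mp this j (Finset.mem_univ j)
        exact this
      simp [this]
    have : ((3 + ∑ j : Fin 3, m j : ℕ) : ℝ) * coeff m q - 3 * coeff m q = 0 := by
      rw [this]; ring
    have hfac : (((∑ j : Fin 3, m j : ℕ) : ℝ)) * coeff m q = 0 := by
      push_cast at this ⊢
      linarith [this]
    rcases mul_eq_zero.mp hfac with h' | h'
    · exfalso
      have : ((∑ j : Fin 3, m j : ℕ) : ℝ) ≠ 0 := by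
        exact_mod_cast hdm.ne'
      exact this h'
    · exact h'
  -- hence q = C (coeff 0 q) and all partials vanish
  have hqC : q = C (coeff 0 q) := by
    ext m
    rw [coeff_C]
    by_cases hm : m = 0
    · subst hm; simp
    · rw [if_neg (fun h => hm h.symm), hq0 m hm]
  have hpd : ∀ i : Fin 3, pderiv i q = 0 := by
    intro i
    rw [hqC, pderiv_C]
  -- Step 3: rowDiv P i = 0, so P i = 0.
  intro i
  apply D_eq_zero
  have := hdiv i
  rw [hpd i] at this
  exact this
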